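/- Let p be a prime and let a_1, ..., a_m be non-negative integers with a_1 + ... + a_m ≤ p - 1. Let X_1, ..., X_m be subsets of F_p such that |X_i - X_j| ≤ a_i + a_j for all i < j. Then there exist elements t_1, ..., t_m ∈ F_p such that the translated sets X_1 + t_1, ..., X_m + t_m are pairwise disjoint. -/

import Mathlib

open Pointwise Finset

section Defs

variable {p m : ℕ}

def pairs (m : ℕ) : Finset (Fin m × Fin m) := {q : Fin m × Fin m | q.1 < q.2}

def tpow (g : Fin m → ℕ) (t : Fin m → ZMod p) : ZMod p := ∏ i, (t i) ^ (g i)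

def formProd (t : Fin m → ZMod p) (L : List ((Fin m × Fin m) × ZMod p)) : ZMod p :=
  (L.map (fun qc => t qc.1.2 - t qc.1.1 - qc.2)).prod

def pureProd (t : Fin m → ZMod p) (M : List (Fin m × Fin m)) : ZMod p :=
  (M.map (fun q => t q.2 - t q.1)).prod

def Vprod (a : Fin m → ℕ) (t : Fin m → ZMod p) : ZMod p :=
  ∏ q ∈ pairs m, (t q.2 - t q.1) ^ (a q.1 + a q.2)

def gwt (p : ℕ) {m : ℕ} (a : Fin m → ℕ) : Fin m → ℕ :=
  fun i => p - 1 - ((∑ j, a j) - a i)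

def Tsum (p : ℕ) [NeZero p] (m : ℕ) (a : Fin m → ℕ) : ZMod p :=
  ∑ t : Fin m → ZMod p, Vprod a t * tpow (gwt p a) t

def dec (a : Fin m → ℕ) (k : Fin m) : Fin m → ℕ :=
  Function.update a k (a k - 1)

lemma mem_pairs (q : Fin m × Fin m) : q ∈ pairs m ↔ q.1 < q.2 := by
  simp [pairs]

end Defs

section Basics
variable {p : ℕ} [hp : Fact p.Prime]

lemma negpow_congr {R : Type*} [Monoid R] [HasDistribNeg R] {x y : ℕ} (h : x % 2 = y % 2) :
    (-1 : R) ^ x = (-1) ^ y := by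
  conv_lhs => rw [← Nat.div_add_mod x 2]
  conv_rhs => rw [← Nat.div_add_mod y 2]
  rw [pow_add, pow_add, pow_mul, pow_mul, neg_one_sq, one_pow, one_pow, h]

lemma sum_pow_eq (k : ℕ) :
    (∑ x : ZMod p, x ^ k) = if k ≠ 0 ∧ (p - 1) ∣ k then -1 else 0 := by
  have hp2 : 2 ≤ p := hp.out.two_le
  by_cases hk : k = 0
  · subst hk
    simp only [pow_zero, Finset.sum_const, card_univ, ZMod.card, nsmul_eq_mul, mul_one,
      ZMod.natCast_self]
    simp
  by_cases hd : (p - 1) ∣ k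
  · rw [if_pos ⟨hk, hd⟩]
    rw [Finset.sum_eq_sum_sdiff_singleton_add (Finset.mem_univ (0 : ZMod p))]
    rw [zero_pow hk, add_zero]
    have h1 : ∀ x ∈ Finset.univ \ {(0 : ZMod p)}, x ^ k = 1 := by
      intro x hx
      obtain ⟨c, rfl⟩ := hd
      rw [pow_mul, ZMod.pow_card_sub_one_eq_one (by simpa using hx), one_pow]
    rw [Finset.sum_congr rfl h1, Finset.sum_const, Finset.card_sdiff_of_subset (by simp),
      Finset.card_singleton, card_univ, ZMod.card, nsmul_eq_mul, mul_one,
      Nat.cast_sub (by omega), Nat.cast_one, ZMod.natCast_self, zero_sub]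
  · rw [if_neg (by tauto)]
    have hql : k % (p - 1) < p - 1 := Nat.mod_lt _ (by omega)
    have hcongr : ∀ x : ZMod p, x ^ k = x ^ (k % (p - 1)) := by
      intro x
      by_cases hx : x = 0
      · subst hx
        rw [zero_pow hk, zero_pow]
        intro h0
        exact hd (Nat.dvd_of_mod_eq_zero h0)
      · conv_lhs => rw [← Nat.div_add_mod k (p - 1)]
        rw [pow_add, pow_mul, ZMod.pow_card_sub_one_eq_one hx, one_pow, one_mul]
    rw [Finset.sum_congr rfl (fun x _ => hcongr x)]
    exact FiniteField.sum_pow_lt_card_sub_one (K := ZMod p) (k % (p - 1))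
      (by rw [ZMod.card]; exact hql)

lemma sum_prod_pow (m : ℕ) (g : Fin m → ℕ) :
    (∑ t : Fin m → ZMod p, ∏ i, (t i) ^ (g i)) = ∏ i, (∑ x : ZMod p, x ^ (g i)) := by
  rw [Finset.prod_univ_sum, ← Fintype.piFinset_univ]

/-- Sub-threshold vanishing for monomial sums. -/
lemma sum_prod_pow_eq_zero {m : ℕ} {g : Fin m → ℕ} (h : ∑ i, g i < m * (p - 1)) :
    (∑ t : Fin m → ZMod p, ∏ i, (t i) ^ (g i)) = 0 := by
  rw [sum_prod_pow]
  by_contra h0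
  have hall : ∀ i, (∑ x : ZMod p, x ^ (g i)) ≠ 0 := by
    intro i hi
    exact h0 (Finset.prod_eq_zero (Finset.mem_univ i) hi)
  have hge : ∀ i : Fin m, p - 1 ≤ g i := by
    intro i
    have := hall i
    rw [sum_pow_eq] at this
    split_ifs at this with hc
    · exact Nat.le_of_dvd (Nat.pos_of_ne_zero hc.1) hc.2
    · simp at this
  have : m * (p - 1) ≤ ∑ i, g i := by
    calc m * (p - 1) = ∑ _i : Fin m, (p - 1) := by simp [mul_comm]
    _ ≤ ∑ i, g i := Finset.sum_le_sum (fun i _ => hge i)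
  omega

end Basics

variable {p : ℕ} [hp : Fact p.Prime]

lemma oneVarE : ∀ (ML : List (ZMod p)) (g : ℕ), ML.length + g < p - 1 →
    (∑ y : ZMod p, (ML.map (fun c => c - y)).prod * y ^ g) = 0 := by
  intro ML
  induction ML with
  | nil =>
    intro g hg
    simp only [List.map_nil, List.prod_nil, one_mul]
    rw [sum_pow_eq]
    rcases Nat.eq_zero_or_pos g with rfl | hg0
    · simp
    · rw [if_neg]
      rintro ⟨-, hdvd⟩
      have := Nat.le_of_dvd hg0 hdvd
      omega
  | cons c ML ih =>
    intro g hg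
    have key : ∀ y : ZMod p, ((c :: ML).map (fun c => c - y)).prod * y ^ g
        = c * ((ML.map (fun c => c - y)).prod * y ^ g)
          - (ML.map (fun c => c - y)).prod * y ^ (g + 1) := by
      intro y
      simp only [List.map_cons, List.prod_cons, pow_succ]
      ring
    rw [Finset.sum_congr rfl fun y _ => key y, Finset.sum_sub_distrib, ← Finset.mul_sum]
    simp only [List.length_cons] at hg
    rw [ih _ (by omega), ih _ (by omega), mul_zero, sub_zero]

lemma oneVarG : ∀ (ML : List (ZMod p)), ML.length ≤ p - 1 →
    (∑ y : ZMod p, (ML.map (fun c => c - y)).prod * y ^ (p - 1 - ML.length))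
      = -(-1 : ZMod p) ^ ML.length := by
  intro ML
  induction ML with
  | nil =>
    have h2 : 2 ≤ p := hp.out.two_le
    intro _
    simp only [List.map_nil, List.prod_nil, one_mul, Nat.sub_zero, List.length_nil, pow_zero]
    rw [sum_pow_eq, if_pos ⟨by omega, dvd_refl _⟩]
  | cons c ML ih =>
    intro hlen
    simp only [List.length_cons] at hlen ⊢
    have key : ∀ y : ZMod p, ((c :: ML).map (fun c => c - y)).prod * y ^ (p - 1 - (ML.length + 1))
        = c * ((ML.map (fun c => c - y)).prod * y ^ (p - 1 - (ML.length + 1)))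
          - (ML.map (fun c => c - y)).prod * y ^ (p - 1 - ML.length) := by
      intro y
      have : p - 1 - ML.length = (p - 1 - (ML.length + 1)) + 1 := by omega
      rw [this]
      simp only [List.map_cons, List.prod_cons, pow_succ]
      ring
    rw [Finset.sum_congr rfl fun y _ => key y, Finset.sum_sub_distrib, ← Finset.mul_sum]
    rw [oneVarE _ _ (by omega), ih (by omega), mul_zero, zero_sub, neg_neg, pow_succ]
    ring

lemma prod_pairs_eq {M : Type*} [CommMonoid M] (m : ℕ) (f : Fin m → Fin m → M) :
    ∏ q ∈ pairs m, f q.1 q.2 = ∏ i, ∏ j ∈ Ioi i, f i j := by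
  rw [pairs, show ({q : Fin m × Fin m | q.1 < q.2} : Finset _)
      = (Finset.univ ×ˢ Finset.univ).filter (fun q => q.1 < q.2) by ext q; simp]
  rw [Finset.prod_filter, Finset.prod_product]
  refine Finset.prod_congr rfl fun i _ => ?_
  rw [← Finset.prod_filter, Finset.filter_lt_eq_Ioi]

lemma prod_pairs_succAbove {M : Type*} [CommMonoid M] {n : ℕ} (k : Fin (n + 1))
    (F : Fin (n + 1) → Fin (n + 1) → M) :
    ∏ q ∈ pairs (n + 1), F q.1 q.2
      = (∏ j : Fin n, if k < k.succAbove j then F k (k.succAbove j) else F (k.succAbove j) k)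
        * ∏ q ∈ pairs n, F (k.succAbove q.1) (k.succAbove q.2) := by
  rw [← Finset.prod_filter_mul_prod_filter_not (pairs (n + 1)) (fun q => q.1 = k ∨ q.2 = k)]
  congr 1
  · refine (Finset.prod_bij (fun (j : Fin n) (_ : j ∈ Finset.univ) =>
      if k < k.succAbove j then (k, k.succAbove j) else (k.succAbove j, k)) ?_ ?_ ?_ ?_).symm
    · intro j _
      rcases lt_or_gt_of_ne (Fin.succAbove_ne k j).symm with h | h
      · rw [if_pos h]
        simp only [Finset.mem_filter, mem_pairs]
        exact ⟨h, Or.inl trivial⟩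
      · rw [if_neg (not_lt.mpr h.le)]
        simp only [Finset.mem_filter, mem_pairs]
        exact ⟨h, Or.inr trivial⟩
    · intro j1 _ j2 _ heq
      split_ifs at heq with h1 h2 h2
      · simp only [Prod.mk.injEq] at heq
        exact Fin.succAbove_right_injective heq.2
      · simp only [Prod.mk.injEq] at heq
        exact absurd heq.1.symm (Fin.succAbove_ne k j2)
      · simp only [Prod.mk.injEq] at heq
        exact absurd heq.1 (Fin.succAbove_ne k j1)
      · simp only [Prod.mk.injEq] at heq
        exact Fin.succAbove_right_injective heq.1
    · rintro ⟨b1, b2⟩ hb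
      simp only [Finset.mem_filter, mem_pairs] at hb
      obtain ⟨hlt, hk | hk⟩ := hb
      · subst hk
        obtain ⟨j, hj⟩ := Fin.exists_succAbove_eq (ne_of_gt hlt)
        refine ⟨j, Finset.mem_univ j, ?_⟩
        rw [if_pos (by rw [hj]; exact hlt), hj]
      · subst hk
        obtain ⟨j, hj⟩ := Fin.exists_succAbove_eq (ne_of_lt hlt)
        refine ⟨j, Finset.mem_univ j, ?_⟩
        rw [if_neg (not_lt.mpr (by rw [hj]; exact hlt.le)), hj]
    · intro j _
      rcases lt_or_gt_of_ne (Fin.succAbove_ne k j).symm with h | h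
      · rw [if_pos h, if_pos h]
      · rw [if_neg (not_lt.mpr h.le), if_neg (not_lt.mpr h.le)]
  · refine (Finset.prod_bij (fun (q : Fin n × Fin n) (_ : q ∈ pairs n) =>
      ((k.succAbove q.1, k.succAbove q.2) : Fin (n+1) × Fin (n+1))) ?_ ?_ ?_ ?_).symm
    · intro q hq
      rw [mem_pairs] at hq
      simp only [Finset.mem_filter, mem_pairs]
      refine ⟨Fin.succAbove_lt_succAbove_iff.mpr hq, ?_⟩
      push_neg
      exact ⟨Fin.succAbove_ne k q.1, Fin.succAbove_ne k q.2⟩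
    · intro q1 _ q2 _ heq
      simp only [Prod.mk.injEq] at heq
      exact Prod.ext (Fin.succAbove_right_injective heq.1)
        (Fin.succAbove_right_injective heq.2)
    · rintro ⟨b1, b2⟩ hb
      simp only [Finset.mem_filter, mem_pairs] at hb
      push_neg at hb
      obtain ⟨hlt, hk1, hk2⟩ := hb
      obtain ⟨j1, hj1⟩ := Fin.exists_succAbove_eq hk1
      obtain ⟨j2, hj2⟩ := Fin.exists_succAbove_eq hk2
      refine ⟨(j1, j2), ?_, ?_⟩
      · rw [mem_pairs]
        rw [← hj1, ← hj2] at hlt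
        exact Fin.succAbove_lt_succAbove_iff.mp hlt
      · dsimp only
        rw [hj1, hj2]
    · intro q _
      rfl

section Lists
variable {p : ℕ} [hp : Fact p.Prime]

variable {m : ℕ}

lemma pureProd_perm (t : Fin m → ZMod p) {A B : List (Fin m × Fin m)} (h : A.Perm B) :
    pureProd t A = pureProd t B :=
  (List.Perm.map _ h).prod_eq

lemma update_eq_add (g : Fin m → ℕ) (j : Fin m) (i : Fin m) :
    Function.update g j (g j + 1) i = g i + (if i = j then 1 else 0) := by
  rcases eq_or_ne i j with rfl | h
  · simp
  · simp [Function.update_of_ne h, h]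

lemma tpow_bump (g : Fin m → ℕ) (t : Fin m → ZMod p) (j : Fin m) :
    tpow (Function.update g j (g j + 1)) t = t j * tpow g t := by
  unfold tpow
  have h : ∀ i, t i ^ (Function.update g j (g j + 1) i)
      = (if i = j then t i else 1) * t i ^ g i := by
    intro i
    rw [update_eq_add]
    rcases eq_or_ne i j with rfl | h
    · simp [pow_succ, mul_comm]
    · simp [h]
  rw [Finset.prod_congr rfl fun i _ => h i, Finset.prod_mul_distrib,
    Finset.prod_ite_eq' Finset.univ j t]
  simp

lemma sum_bump (g : Fin m → ℕ) (j : Fin m) :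
    ∑ i, Function.update g j (g j + 1) i = (∑ i, g i) + 1 := by
  rw [Finset.sum_congr rfl fun i _ => update_eq_add g j i, Finset.sum_add_distrib,
    Finset.sum_ite_eq' Finset.univ j (fun _ => 1)]
  simp

lemma lemmaE : ∀ (L : List ((Fin m × Fin m) × ZMod p)) (g : Fin m → ℕ),
    L.length + ∑ i, g i < m * (p - 1) →
    (∑ t : Fin m → ZMod p, formProd t L * tpow g t) = 0 := by
  intro L
  induction L with
  | nil =>
    intro g hg
    simp only [formProd, List.map_nil, List.prod_nil, one_mul]
    exact sum_prod_pow_eq_zero (by simpa using hg)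
  | cons qc L ih =>
    intro g hg
    obtain ⟨⟨i, j⟩, c⟩ := qc
    have key : ∀ t : Fin m → ZMod p,
        formProd t (((i, j), c) :: L) * tpow g t
          = formProd t L * tpow (Function.update g j (g j + 1)) t
            - formProd t L * tpow (Function.update g i (g i + 1)) t
            - c * (formProd t L * tpow g t) := by
      intro t
      simp only [formProd, List.map_cons, List.prod_cons]
      rw [tpow_bump, tpow_bump]
      ring
    rw [Finset.sum_congr rfl (fun t _ => key t)]
    rw [Finset.sum_sub_distrib, Finset.sum_sub_distrib, ← Finset.mul_sum]
    have hlen : L.length + 1 + ∑ i, g i < m * (p - 1) := by simpa using hg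
    rw [ih _ (by rw [sum_bump]; omega), ih _ (by rw [sum_bump]; omega), ih _ (by omega)]
    ring

lemma formProd_append_pure (t : Fin m → ZMod p) (L : List ((Fin m × Fin m) × ZMod p))
    (M : List (Fin m × Fin m)) :
    formProd t (L ++ M.map (fun q => (q, 0))) = formProd t L * pureProd t M := by
  unfold formProd pureProd
  rw [List.map_append, List.prod_append, List.map_map]
  congr 2
  simp [Function.comp_def]

lemma lemmaF : ∀ (L : List ((Fin m × Fin m) × ZMod p)) (M : List (Fin m × Fin m))
    (g : Fin m → ℕ), L.length + M.length + ∑ i, g i = m * (p - 1) →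
    (∑ t : Fin m → ZMod p, formProd t L * pureProd t M * tpow g t)
      = ∑ t : Fin m → ZMod p, pureProd t (L.map Prod.fst ++ M) * tpow g t := by
  intro L
  induction L with
  | nil => intro M g _; simp [formProd]
  | cons qc L ih =>
    intro M g hg
    obtain ⟨⟨i, j⟩, c⟩ := qc
    have key : ∀ t : Fin m → ZMod p,
        formProd t (((i, j), c) :: L) * pureProd t M * tpow g t
          = formProd t L * pureProd t ((i, j) :: M) * tpow g t
            - c * (formProd t (L ++ List.map (fun q => (q, 0)) M) * tpow g t) := by
      intro t
      rw [formProd_append_pure]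
      simp only [formProd, pureProd, List.map_cons, List.prod_cons]
      ring
    rw [Finset.sum_congr rfl (fun t _ => key t), Finset.sum_sub_distrib, ← Finset.mul_sum]
    rw [lemmaE _ _ (by simp at hg ⊢; omega)]
    rw [ih _ _ (by simp at hg ⊢; omega)]
    simp only [List.map_cons, mul_zero, sub_zero]
    apply Finset.sum_congr rfl
    intro t _
    rw [pureProd_perm t (List.perm_middle (a := (i, j)) (l₁ := List.map Prod.fst L)
      (l₂ := M))]
    rfl

end Lists

lemma lemmaI {R : Type*} [CommRing R] {n : ℕ} (t : Fin (n + 1) → R) :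
    ∏ q ∈ pairs (n + 1), (t q.2 - t q.1)
      = ∑ k : Fin (n + 1), (-1 : R) ^ (k : ℕ) * (∏ j : Fin n, t (k.succAbove j))
          * ∏ q ∈ pairs n, (t (k.succAbove q.2) - t (k.succAbove q.1)) := by
  have hv : ∏ q ∈ pairs (n + 1), (t q.2 - t q.1) = (Matrix.vandermonde t).det := by
    rw [Matrix.det_vandermonde, prod_pairs_eq (n + 1) (fun i j => t j - t i)]
  rw [hv, Matrix.det_succ_column_zero]
  refine Finset.sum_congr rfl fun k _ => ?_
  have hsub : (Matrix.vandermonde t).submatrix k.succAbove Fin.succ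
      = Matrix.of (fun i j => t (k.succAbove i) * Matrix.vandermonde (t ∘ k.succAbove) i j) := by
    ext i j
    simp only [Matrix.submatrix_apply, Matrix.vandermonde_apply, Matrix.of_apply,
      Function.comp_apply, Fin.val_succ, pow_succ]
    ring
  rw [hsub, Matrix.det_mul_column, Matrix.det_vandermonde,
    ← prod_pairs_eq n (fun i j => (t ∘ k.succAbove) j - (t ∘ k.succAbove) i)]
  simp only [Matrix.vandermonde_apply, Fin.val_zero, pow_zero, mul_one, Function.comp_apply]
  ring

section TS
variable {p : ℕ} [NeZero p]

lemma sum_dec {m : ℕ} (a : Fin m → ℕ) (k : Fin m) (ha : 1 ≤ a k) :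
    ∑ i, dec a k i = (∑ i, a i) - 1 := by
  unfold dec
  rw [Finset.sum_update_of_mem (Finset.mem_univ k)]
  have h := Finset.add_sum_erase Finset.univ a (Finset.mem_univ k)
  have h2 : univ \ {k} = univ.erase k := by
    ext; simp [Finset.mem_erase, and_comm]
  rw [h2]
  omega

lemma pair_le_sum {m : ℕ} (a : Fin m → ℕ) {i k : Fin m} (h : i ≠ k) :
    a i + a k ≤ ∑ j, a j := by
  have h1 := Finset.add_sum_erase Finset.univ a (Finset.mem_univ k)
  have h2 : a i ≤ ∑ j ∈ univ.erase k, a j :=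
    Finset.single_le_sum (fun _ _ => Nat.zero_le _) (Finset.mem_erase.mpr ⟨h, Finset.mem_univ i⟩)
  omega

lemma lemmaR {n : ℕ} (a : Fin (n + 1) → ℕ) (ha : ∀ i, 1 ≤ a i) (t : Fin (n + 1) → ZMod p) :
    Vprod a t = ∑ k : Fin (n + 1), (-1 : ZMod p) ^ (k : ℕ)
      * (∏ j : Fin n, t (k.succAbove j)) * Vprod (dec a k) t := by
  have h1 : Vprod a t
      = (∏ q ∈ pairs (n + 1), (t q.2 - t q.1) ^ (a q.1 + a q.2 - 1))
        * ∏ q ∈ pairs (n + 1), (t q.2 - t q.1) := by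
    rw [← Finset.prod_mul_distrib]
    exact Finset.prod_congr rfl fun q _ => by
      rw [← pow_succ]
      congr 1
      have := ha q.1; have := ha q.2
      omega
  rw [h1, lemmaI, Finset.mul_sum]
  refine Finset.sum_congr rfl fun k _ => ?_
  have h2 : (∏ q ∈ pairs (n + 1), (t q.2 - t q.1) ^ (a q.1 + a q.2 - 1))
      * ∏ q ∈ pairs n, (t (k.succAbove q.2) - t (k.succAbove q.1))
      = Vprod (dec a k) t := by
    rw [Vprod, prod_pairs_succAbove k (fun i j => (t j - t i) ^ (dec a k i + dec a k j)),
      prod_pairs_succAbove k (fun i j => (t j - t i) ^ (a i + a j - 1))]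
    have hGd : ∀ j : Fin n,
        (if k < k.succAbove j
          then (t (k.succAbove j) - t k) ^ (dec a k k + dec a k (k.succAbove j))
          else (t k - t (k.succAbove j)) ^ (dec a k (k.succAbove j) + dec a k k))
        = (if k < k.succAbove j
          then (t (k.succAbove j) - t k) ^ (a k + a (k.succAbove j) - 1)
          else (t k - t (k.succAbove j)) ^ (a (k.succAbove j) + a k - 1)) := by
      intro j
      have hne := Fin.succAbove_ne k j
      have hdk : dec a k k = a k - 1 := by simp [dec]
      have hdj : dec a k (k.succAbove j) = a (k.succAbove j) := by
        simp [dec, Function.update_of_ne hne]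
      have h1 := ha k
      split_ifs
      · rw [hdk, hdj]; congr 1; omega
      · rw [hdk, hdj]; congr 1; omega
    have hrest : ∀ q ∈ pairs n,
        (t (k.succAbove q.2) - t (k.succAbove q.1))
            ^ (dec a k (k.succAbove q.1) + dec a k (k.succAbove q.2))
        = (t (k.succAbove q.2) - t (k.succAbove q.1))
            ^ (a (k.succAbove q.1) + a (k.succAbove q.2) - 1)
          * (t (k.succAbove q.2) - t (k.succAbove q.1)) := by
      intro q _
      have hd1 : dec a k (k.succAbove q.1) = a (k.succAbove q.1) := by
        simp [dec, Function.update_of_ne (Fin.succAbove_ne k q.1)]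
      have hd2 : dec a k (k.succAbove q.2) = a (k.succAbove q.2) := by
        simp [dec, Function.update_of_ne (Fin.succAbove_ne k q.2)]
      rw [hd1, hd2, ← pow_succ]
      congr 1
      have := ha (k.succAbove q.1); have := ha (k.succAbove q.2)
      omega
    rw [Finset.prod_congr rfl fun j (_ : j ∈ univ) => hGd j,
      Finset.prod_congr rfl hrest, Finset.prod_mul_distrib]
    ring
  rw [← h2]
  ring

end TS

section TS
variable {p : ℕ} [NeZero p]

lemma Tsum_rec {n : ℕ} (a : Fin (n + 1) → ℕ) (ha1 : ∀ i, 1 ≤ a i) (hA : ∑ i, a i ≤ p - 1) :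
    Tsum p (n + 1) a = ∑ k : Fin (n + 1), (-1 : ZMod p) ^ (k : ℕ) * Tsum p (n + 1) (dec a k) := by
  unfold Tsum
  rw [Finset.sum_congr rfl fun t _ => by rw [lemmaR a ha1 t, Finset.sum_mul]]
  rw [Finset.sum_comm]
  refine Finset.sum_congr rfl fun k _ => ?_
  rw [Finset.mul_sum]
  refine Finset.sum_congr rfl fun t _ => ?_
  have hsA : ∀ j : Fin n, gwt p (dec a k) (k.succAbove j) = gwt p a (k.succAbove j) + 1 := by
    intro j
    have hne := Fin.succAbove_ne k j
    have hps := pair_le_sum a hne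
    have hsd := sum_dec a k (ha1 k)
    have hdj : dec a k (k.succAbove j) = a (k.succAbove j) := by
      simp [dec, Function.update_of_ne hne]
    have h1 := ha1 k
    unfold gwt
    rw [hsd, hdj]
    omega
  have hk : gwt p (dec a k) k = gwt p a k := by
    have hsd := sum_dec a k (ha1 k)
    have hdk : dec a k k = a k - 1 := by simp [dec]
    have h1 := ha1 k
    have hle : a k ≤ ∑ i, a i :=
      Finset.single_le_sum (fun _ _ => Nat.zero_le _) (Finset.mem_univ k)
    unfold gwt
    rw [hsd, hdk]
    omega
  have hw : tpow (gwt p (dec a k)) t = (∏ j : Fin n, t (k.succAbove j)) * tpow (gwt p a) t := by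
    unfold tpow
    rw [Fin.prod_univ_succAbove (fun i => t i ^ gwt p a i) k,
        Fin.prod_univ_succAbove (fun i => t i ^ gwt p (dec a k) i) k, hk]
    rw [Finset.prod_congr rfl fun j (_ : j ∈ univ) => by rw [hsA j, pow_succ]]
    rw [Finset.prod_mul_distrib]
    ring
  rw [hw]
  ring

lemma prod_map_flatMap {α β M : Type*} [CommMonoid M] (l : List α) (g : α → List β) (f : β → M) :
    ((l.flatMap g).map f).prod = (l.map (fun x => ((g x).map f).prod)).prod := by
  induction l with
  | nil => rfl
  | cons x l ih =>
    rw [List.flatMap_cons, List.map_append, List.prod_append, ih, List.map_cons, List.prod_cons]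

lemma prod_pow_fin {n : ℕ} {M : Type*} [CommMonoid M] (b : Fin n → ℕ) (v : Fin n → M) :
    (((List.finRange n).flatMap (fun j => List.replicate (b j) (v j))).map id).prod
      = ∏ j, (v j) ^ (b j) := by
  rw [prod_map_flatMap]
  rw [← Fin.prod_univ_def]
  exact Finset.prod_congr rfl fun j _ => by rw [List.map_replicate, List.prod_replicate, id]

lemma length_flatMap_fin {n : ℕ} {β : Type*} (b : Fin n → ℕ) (v : Fin n → β) :
    ((List.finRange n).flatMap (fun j => List.replicate (b j) (v j))).length = ∑ j, b j := by
  rw [List.length_flatMap, ← Fin.sum_univ_def]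
  simp

end TS

section Boundary
variable {p : ℕ} [hp : Fact p.Prime]

lemma prod_pow_fin' {n : ℕ} {β M : Type*} [CommMonoid M] (b : Fin n → ℕ) (v : Fin n → β)
    (f : β → M) :
    (((List.finRange n).flatMap (fun j => List.replicate (b j) (v j))).map f).prod
      = ∏ j, (f (v j)) ^ (b j) := by
  rw [prod_map_flatMap, ← Fin.prod_univ_def]
  exact Finset.prod_congr rfl fun j _ => by rw [List.map_replicate, List.prod_replicate]

lemma Tsum_boundary {n : ℕ} (a : Fin (n + 1) → ℕ) (k : Fin (n + 1)) (hak : a k = 0)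
    (hA : ∑ i, a i ≤ p - 1) :
    Tsum p (n + 1) a
      = -((-1 : ZMod p) ^ ((∑ i, a i)
          + ∑ j : Fin n, (if k < k.succAbove j then 0 else a (k.succAbove j))))
        * Tsum p n (a ∘ k.succAbove) := by
  classical
  set a' : Fin n → ℕ := a ∘ k.succAbove with ha'
  have hsum' : ∑ j, a' j = ∑ i, a i := by
    rw [Fin.sum_univ_succAbove a k, hak, zero_add]
    rfl
  set A := ∑ i, a i with hA'
  set σ := ∑ j : Fin n, (if k < k.succAbove j then 0 else a' j) with hσ
  rw [Tsum, ← Equiv.sum_comp (Fin.insertNthEquiv (fun _ => ZMod p) k), Fintype.sum_prod_type]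
  have main : ∀ (y : ZMod p) (s : Fin n → ZMod p),
      Vprod a ((Fin.insertNthEquiv (fun _ => ZMod p) k) (y, s))
        * tpow (gwt p a) ((Fin.insertNthEquiv (fun _ => ZMod p) k) (y, s))
      = ((-1 : ZMod p) ^ σ)
        * (Vprod a' s * tpow (gwt p a') s)
        * ((((List.finRange n).flatMap
              (fun j => List.replicate (a' j) (s j))).map (fun c => c - y)).prod
            * y ^ (p - 1 - A)) := by
    intro y s
    have hins : ∀ i, (Fin.insertNthEquiv (fun _ => ZMod p) k) (y, s) (k.succAbove i) = s i := by
      intro i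
      simp [Fin.insertNthEquiv]
    have hinsk : (Fin.insertNthEquiv (fun _ => ZMod p) k) (y, s) k = y := by
      simp [Fin.insertNthEquiv]
    set t := (Fin.insertNthEquiv (fun _ => ZMod p) k) (y, s) with ht
    rw [Vprod, prod_pairs_succAbove k (fun i j => (t j - t i) ^ (a i + a j))]
    have hG : ∀ j : Fin n,
        (if k < k.succAbove j then (t (k.succAbove j) - t k) ^ (a k + a (k.succAbove j))
          else (t k - t (k.succAbove j)) ^ (a (k.succAbove j) + a k))
        = ((if k < k.succAbove j then 1 else (-1 : ZMod p) ^ (a' j)) * (s j - y) ^ (a' j)) := by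
      intro j
      rw [hins j, hinsk]
      split_ifs
      · rw [hak, zero_add, one_mul, ha']; rfl
      · rw [hak, add_zero, ← neg_sub (s j) y, neg_pow, ha']; rfl
    rw [Finset.prod_congr rfl fun j (_ : j ∈ univ) => hG j, Finset.prod_mul_distrib]
    have hsg : (∏ x : Fin n, if k < k.succAbove x then 1 else (-1 : ZMod p) ^ a' x)
        = (-1 : ZMod p) ^ σ := by
      rw [hσ, ← Finset.prod_pow_eq_pow_sum]
      exact Finset.prod_congr rfl fun j _ => by split_ifs <;> simp
    have hrest : (∏ q ∈ pairs n,
        (t (k.succAbove q.2) - t (k.succAbove q.1)) ^ (a (k.succAbove q.1) + a (k.succAbove q.2)))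
        = Vprod a' s := by
      rw [Vprod]
      exact Finset.prod_congr rfl fun q _ => by rw [hins q.1, hins q.2]; rfl
    have hml : (((List.finRange n).flatMap
          (fun j => List.replicate (a' j) (s j))).map (fun c => c - y)).prod
        = ∏ j, (s j - y) ^ (a' j) := prod_pow_fin' a' s (fun c => c - y)
    have htp : tpow (gwt p a) t = y ^ (p - 1 - A) * tpow (gwt p a') s := by
      unfold tpow
      rw [Fin.prod_univ_succAbove (fun i => t i ^ gwt p a i) k, hinsk]
      have h1 : gwt p a k = p - 1 - A := by
        unfold gwt
        rw [← hA', hak, Nat.sub_zero]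
      have h2 : ∀ j : Fin n, t (k.succAbove j) ^ gwt p a (k.succAbove j)
          = s j ^ gwt p a' j := by
        intro j
        rw [hins j]
        congr 1
        unfold gwt
        rw [hsum', ← hA']
        rfl
      rw [h1, Finset.prod_congr rfl fun j (_ : j ∈ univ) => h2 j]
    rw [hsg, hrest, hml, htp]
    ring
  rw [Finset.sum_congr rfl fun y (_ : y ∈ univ) => Finset.sum_congr rfl fun s _ => main y s]
  rw [Finset.sum_comm]
  have hper : ∀ s : Fin n → ZMod p,
      (∑ y : ZMod p, ((-1 : ZMod p) ^ σ) * (Vprod a' s * tpow (gwt p a') s)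
        * ((((List.finRange n).flatMap
              (fun j => List.replicate (a' j) (s j))).map (fun c => c - y)).prod
            * y ^ (p - 1 - A)))
      = (-((-1 : ZMod p) ^ (A + σ))) * (Vprod a' s * tpow (gwt p a') s) := by
    intro s
    rw [← Finset.mul_sum]
    have hlen : ((List.finRange n).flatMap (fun j => List.replicate (a' j) (s j))).length = A := by
      rw [length_flatMap_fin, hsum']
    have := oneVarG ((List.finRange n).flatMap (fun j => List.replicate (a' j) (s j)))
      (by rw [hlen]; exact hA)
    rw [hlen] at this
    rw [this, pow_add]
    ring
  rw [Finset.sum_congr rfl fun s (_ : s ∈ univ) => hper s, ← Finset.mul_sum, Tsum]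
  rfl

end Boundary

lemma multinomial_univ_zero (a : Fin 0 → ℕ) : Nat.multinomial Finset.univ a = 1 := by
  have : (Finset.univ : Finset (Fin 0)) = ∅ := by simp
  rw [this, Nat.multinomial_empty]

lemma multinomial_boundary {n : ℕ} (a : Fin (n + 1) → ℕ) (k : Fin (n + 1)) (hak : a k = 0) :
    Nat.multinomial Finset.univ a = Nat.multinomial Finset.univ (a ∘ k.succAbove) := by
  have h1 := Nat.multinomial_spec Finset.univ a
  have h2 := Nat.multinomial_spec Finset.univ (a ∘ k.succAbove)
  have hprod : ∏ i, (a i).factorial = ∏ j, ((a ∘ k.succAbove) j).factorial := by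
    rw [Fin.prod_univ_succAbove (fun i => (a i).factorial) k, hak]
    simp
  have hsum : ∑ i, a i = ∑ j, (a ∘ k.succAbove) j := by
    rw [Fin.sum_univ_succAbove a k, hak, zero_add]
    rfl
  rw [hprod, hsum] at h1
  exact Nat.eq_of_mul_eq_mul_left (Finset.prod_pos fun i _ => Nat.factorial_pos _)
    (h1.trans h2.symm)

lemma multinomial_rec {n : ℕ} (a : Fin (n + 1) → ℕ) (ha : ∀ i, 1 ≤ a i) :
    ∑ k, Nat.multinomial Finset.univ (dec a k) = Nat.multinomial Finset.univ a := by
  have key : ∀ k, Nat.multinomial Finset.univ (dec a k) * (∏ i, (a i).factorial)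
      = a k * ((∑ i, a i) - 1).factorial := by
    intro k
    have hspec := Nat.multinomial_spec Finset.univ (dec a k)
    have hsd : ∑ i, dec a k i = (∑ i, a i) - 1 := by
      unfold dec
      rw [Finset.sum_update_of_mem (Finset.mem_univ k)]
      have h := Finset.add_sum_erase Finset.univ a (Finset.mem_univ k)
      have h2 : (Finset.univ \ {k} : Finset (Fin (n+1))) = Finset.univ.erase k := by
        ext; simp [Finset.mem_erase, and_comm]
      rw [h2]
      have := ha k
      omega
    have hfac : ∏ i, (a i).factorial = a k * ∏ i, (dec a k i).factorial := by
      rw [← Finset.mul_prod_erase Finset.univ (fun i => (a i).factorial) (Finset.mem_univ k),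
          ← Finset.mul_prod_erase Finset.univ (fun i => (dec a k i).factorial) (Finset.mem_univ k)]
      have h1 : ∏ i ∈ Finset.univ.erase k, (a i).factorial
          = ∏ i ∈ Finset.univ.erase k, (dec a k i).factorial := by
        refine Finset.prod_congr rfl fun i hi => ?_
        rw [show dec a k i = a i from by
          simp [dec, Function.update_of_ne (Finset.mem_erase.mp hi).1]]
      have hdk : dec a k k = a k - 1 := by simp [dec]
      rw [h1, hdk, ← Nat.mul_factorial_pred (Nat.one_le_iff_ne_zero.mp (ha k))]
      ring
    rw [hsd] at hspec
    calc Nat.multinomial Finset.univ (dec a k) * ∏ i, (a i).factorial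
        = a k * ((∏ i, (dec a k i).factorial) * Nat.multinomial Finset.univ (dec a k)) := by
          rw [hfac]; ring
      _ = a k * ((∑ i, a i) - 1).factorial := by rw [hspec]
  have hsum : (∑ k, Nat.multinomial Finset.univ (dec a k)) * (∏ i, (a i).factorial)
      = (∑ i, a i).factorial := by
    rw [Finset.sum_mul, Finset.sum_congr rfl fun k _ => key k, ← Finset.sum_mul]
    have hA1 : 0 < ∑ i, a i := by
      calc 0 < a 0 := ha 0
      _ ≤ ∑ i, a i := Finset.single_le_sum (fun _ _ => Nat.zero_le _) (Finset.mem_univ 0)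
    exact Nat.mul_factorial_pred hA1.ne'
  have hspec := Nat.multinomial_spec Finset.univ a
  rw [← hspec, mul_comm (∏ i, (a i).factorial)] at hsum
  exact Nat.eq_of_mul_eq_mul_right (Finset.prod_pos fun i _ => Nat.factorial_pos _) hsum

lemma multinomial_ne_zero_mod {p : ℕ} [hp : Fact p.Prime] {m : ℕ} (a : Fin m → ℕ)
    (hA : ∑ i, a i ≤ p - 1) :
    ((Nat.multinomial Finset.univ a : ℕ) : ZMod p) ≠ 0 := by
  rw [Ne, ZMod.natCast_eq_zero_iff]
  intro hdvd
  have h1 : Nat.multinomial Finset.univ a ∣ (∑ i, a i).factorial :=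
    Dvd.intro_left _ (Nat.multinomial_spec Finset.univ a)
  have h2 : p ∣ (∑ i, a i).factorial := hdvd.trans h1
  have h3 := (Nat.Prime.dvd_factorial hp.out).mp h2
  have := hp.out.two_le
  omega

lemma sigma_eq {n : ℕ} (a : Fin (n + 1) → ℕ) (k : Fin (n + 1)) (hak : a k = 0) :
    (∑ i : Fin (n + 1), (i : ℕ) * a i)
        + (∑ j : Fin n, if k < k.succAbove j then 0 else a (k.succAbove j))
      = (∑ j : Fin n, (j : ℕ) * a (k.succAbove j)) + ∑ i : Fin (n + 1), a i := by
  rw [Fin.sum_univ_succAbove (fun i => (i : ℕ) * a i) k, hak, Nat.mul_zero, zero_add,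
    Fin.sum_univ_succAbove a k, hak, zero_add, ← Finset.sum_add_distrib,
    ← Finset.sum_add_distrib]
  refine Finset.sum_congr rfl fun j _ => ?_
  rcases lt_or_ge (j.castSucc) k with h | h
  · rw [Fin.succAbove_of_castSucc_lt _ _ h, if_neg (by
      intro hlt
      exact absurd (hlt.trans h) (lt_irrefl _))]
    simp only [Fin.coe_castSucc]
  · rw [Fin.succAbove_of_le_castSucc _ _ h, if_pos (h.trans_lt (Fin.castSucc_lt_succ (i := j)))]
    simp only [Fin.val_succ]
    ring

lemma sum_mul_dec {m : ℕ} (a : Fin m → ℕ) (k : Fin m) (ha : 1 ≤ a k) :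
    (∑ i : Fin m, (i : ℕ) * dec a k i) + (k : ℕ) = ∑ i : Fin m, (i : ℕ) * a i := by
  obtain ⟨b, hb⟩ : ∃ b, a k = b + 1 := ⟨a k - 1, by omega⟩
  have h1 := Finset.add_sum_erase Finset.univ (fun (i : Fin m) => (i : ℕ) * a i) (Finset.mem_univ k)
  have h2 := Finset.add_sum_erase Finset.univ (fun (i : Fin m) => (i : ℕ) * dec a k i) (Finset.mem_univ k)
  have h3 : ∑ i ∈ Finset.univ.erase k, (i : ℕ) * dec a k i
      = ∑ i ∈ Finset.univ.erase k, (i : ℕ) * a i := by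
    refine Finset.sum_congr rfl fun i hi => ?_
    rw [show dec a k i = a i from by
      simp [dec, Function.update_of_ne (Finset.mem_erase.mp hi).1]]
  have hdk : dec a k k = b := by simp [dec, hb]
  simp only [hdk, hb] at h1 h2
  have hmul : (k : ℕ) * (b + 1) = (k : ℕ) * b + (k : ℕ) := by ring
  omega

theorem dyson {p : ℕ} [hp : Fact p.Prime] : ∀ (m : ℕ) (a : Fin m → ℕ), (∑ i, a i ≤ p - 1) →
    Tsum p m a = (-1 : ZMod p) ^ (m + ∑ i : Fin m, (i : ℕ) * a i)
      * ((Nat.multinomial Finset.univ a : ℕ) : ZMod p) := by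
  intro m
  induction m with
  | zero =>
    intro a _
    rw [Tsum, multinomial_univ_zero]
    have h1 : ∀ t : Fin 0 → ZMod p, Vprod a t * tpow (gwt p a) t = 1 := by
      intro t
      have : pairs 0 = ∅ := by
        ext q
        exact absurd q.1.2 (by omega)
      simp [Vprod, tpow, this]
    rw [Finset.sum_congr rfl fun t _ => h1 t, Finset.sum_const]
    simp
  | succ n ih =>
    suffices H : ∀ (A : ℕ) (a : Fin (n + 1) → ℕ), ∑ i, a i = A → A ≤ p - 1 →
        Tsum p (n + 1) a = (-1 : ZMod p) ^ ((n + 1) + ∑ i : Fin (n + 1), (i : ℕ) * a i)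
          * ((Nat.multinomial Finset.univ a : ℕ) : ZMod p) by
      intro a ha
      exact H _ a rfl ha
    intro A
    induction A using Nat.strong_induction_on with
    | _ A ihA =>
      intro a hAsum hA
      have hA0 : ∑ i, a i ≤ p - 1 := by rw [hAsum]; exact hA
      by_cases hz : ∃ k, a k = 0
      · obtain ⟨k, hk⟩ := hz
        have hsum' : ∑ j, (a ∘ k.succAbove) j = ∑ i, a i := by
          rw [Fin.sum_univ_succAbove a k, hk, zero_add]
          rfl
        rw [Tsum_boundary a k hk hA0, ih (a ∘ k.succAbove) (by rw [hsum']; exact hA0),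
          multinomial_boundary a k hk]
        have hcomb : ∀ (E1 E2 : ℕ) (C : ZMod p),
            -((-1 : ZMod p) ^ E1) * ((-1) ^ E2 * C) = (-1) ^ (E1 + E2 + 1) * C := by
          intro E1 E2 C
          rw [pow_add, pow_add, pow_one]
          ring
        rw [hcomb]
        have hσ := sigma_eq a k hk
        rw [negpow_congr (x := (∑ i, a i
            + ∑ j : Fin n, (if k < k.succAbove j then 0 else a (k.succAbove j)))
            + (n + ∑ j : Fin n, (j : ℕ) * (a ∘ k.succAbove) j) + 1)
          (y := (n + 1) + ∑ i : Fin (n + 1), (i : ℕ) * a i) (by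
            simp only [Function.comp_apply] at hσ ⊢
            omega)]
      · push_neg at hz
        have ha1 : ∀ i, 1 ≤ a i := fun i => Nat.one_le_iff_ne_zero.mpr (hz i)
        have hA1 : 1 ≤ A := by
          rw [← hAsum]
          calc 1 ≤ a 0 := ha1 0
          _ ≤ ∑ i, a i := Finset.single_le_sum (fun _ _ => Nat.zero_le _) (Finset.mem_univ 0)
        rw [Tsum_rec a ha1 hA0]
        have hterm : ∀ k : Fin (n + 1),
            (-1 : ZMod p) ^ (k : ℕ) * Tsum p (n + 1) (dec a k)
              = (-1 : ZMod p) ^ ((n + 1) + ∑ i : Fin (n + 1), (i : ℕ) * a i)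
                * ((Nat.multinomial Finset.univ (dec a k) : ℕ) : ZMod p) := by
          intro k
          have hdsum : ∑ i, dec a k i = A - 1 := by rw [sum_dec a k (ha1 k), hAsum]
          rw [ihA (A - 1) (by omega) (dec a k) hdsum (by omega)]
          rw [← mul_assoc, ← pow_add]
          have hsd := sum_mul_dec a k (ha1 k)
          rw [negpow_congr (x := (k : ℕ) + ((n + 1) + ∑ i : Fin (n + 1), (i : ℕ) * dec a k i))
            (y := (n + 1) + ∑ i : Fin (n + 1), (i : ℕ) * a i) (by omega)]
        rw [Finset.sum_congr rfl fun k _ => hterm k, ← Finset.mul_sum]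
        rw [← Nat.cast_sum, multinomial_rec a ha1]

lemma pairs_sum {m : ℕ} (a : Fin m → ℕ) :
    (∑ q ∈ pairs m, (a q.1 + a q.2)) + ∑ i, a i = m * ∑ i, a i := by
  classical
  have h1 : ∑ q ∈ pairs m, (a q.1 + a q.2)
      = ∑ q ∈ pairs m, a q.1 + ∑ q ∈ pairs m, a q.2 := Finset.sum_add_distrib
  have h2 : ∑ q ∈ pairs m, a q.2
      = ∑ q ∈ (Finset.univ.filter fun q : Fin m × Fin m => q.2 < q.1), a q.1 := by
    refine Finset.sum_bij (fun q _ => q.swap) ?_ ?_ ?_ ?_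
    · intro q hq
      simp only [Finset.mem_filter, Finset.mem_univ, true_and, Prod.fst_swap, Prod.snd_swap]
      exact (mem_pairs q).mp hq
    · intro q1 _ q2 _ h
      exact Prod.swap_injective h
    · intro b hb
      refine ⟨b.swap, ?_, by simp⟩
      rw [mem_pairs]
      simpa using (Finset.mem_filter.mp hb).2
    · intro q _
      rfl
  have h3 : Disjoint (pairs m) (Finset.univ.filter fun q : Fin m × Fin m => q.2 < q.1) := by
    rw [Finset.disjoint_left]
    intro q hq hq'
    have := (mem_pairs q).mp hq
    have := (Finset.mem_filter.mp hq').2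
    omega
  have h4 : pairs m ∪ (Finset.univ.filter fun q : Fin m × Fin m => q.2 < q.1)
      = Finset.univ.filter fun q : Fin m × Fin m => ¬ q.1 = q.2 := by
    ext q
    simp only [Finset.mem_union, mem_pairs, Finset.mem_filter, Finset.mem_univ, true_and]
    constructor
    · rintro (h | h) <;> exact fun he => by rw [he] at h; exact lt_irrefl _ h
    · intro h
      rcases Ne.lt_or_gt (show q.1 ≠ q.2 from h) with hlt | hlt
      · exact Or.inl hlt
      · exact Or.inr hlt
  have h5 := Finset.sum_filter_add_sum_filter_not Finset.univ
    (fun q : Fin m × Fin m => q.1 = q.2) (fun q => a q.1)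
  have h6 : ∑ q : Fin m × Fin m, a q.1 = m * ∑ i, a i := by
    rw [Fintype.sum_prod_type]
    simp only [Finset.sum_const, Finset.card_univ, Fintype.card_fin, smul_eq_mul]
    rw [Finset.mul_sum]
  have h7 : ∑ q ∈ Finset.univ.filter (fun q : Fin m × Fin m => q.1 = q.2), a q.1
      = ∑ i, a i := by
    refine Finset.sum_bij (fun q _ => q.1) (fun _ _ => Finset.mem_univ _) ?_ ?_ ?_
    · intro q1 hq1 q2 hq2 h
      have e1 := (Finset.mem_filter.mp hq1).2
      have e2 := (Finset.mem_filter.mp hq2).2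
      exact Prod.ext h (e1 ▸ e2 ▸ h)
    · intro i _
      exact ⟨(i, i), Finset.mem_filter.mpr ⟨Finset.mem_univ _, rfl⟩, rfl⟩
    · intro q _
      rfl
  have h8 := Finset.sum_union h3 (f := fun q => a q.1)
  rw [h4] at h8
  beta_reduce at h8
  omega

theorem packing_translates_Fp_weights (p : ℕ) (hp : p.Prime) (m : ℕ)
    (a : Fin m → ℕ) (ha : ∑ i, a i ≤ p - 1)
    (X : Fin m → Finset (ZMod p))
    (hX : ∀ i j : Fin m, i < j → (X i - X j).card ≤ a i + a j) :
    ∃ t : Fin m → ZMod p,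
      ∀ i j, i ≠ j →
        Disjoint ((X i).image (fun x => x + t i))
          ((X j).image (fun x => x + t j)) := by
  haveI : Fact p.Prime := ⟨hp⟩
  classical
  set pad : Fin m × Fin m → List (ZMod p) := fun q =>
    (X q.1 - X q.2).toList ++ List.replicate ((a q.1 + a q.2) - (X q.1 - X q.2).card) 0
    with hpad
  have hpadlen : ∀ q ∈ pairs m, (pad q).length = a q.1 + a q.2 := by
    intro q hq
    have := hX q.1 q.2 ((mem_pairs q).mp hq)
    simp only [hpad, List.length_append, List.length_replicate, Finset.length_toList]
    omega
  set L0 : List ((Fin m × Fin m) × ZMod p) :=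
    (pairs m).toList.flatMap (fun q => (pad q).map (fun c => (q, c))) with hL0
  have hlen : L0.length = ∑ q ∈ pairs m, (a q.1 + a q.2) := by
    rw [hL0, List.length_flatMap]
    rw [List.map_congr_left (l := (pairs m).toList)
      (f := fun q => ((pad q).map (fun c => (q, c))).length)
      (g := fun q => a q.1 + a q.2) (fun q hq => by
        simp only [Function.comp_apply, List.length_map]
        exact hpadlen q (Finset.mem_toList.mp hq))]
    exact Finset.sum_map_toList (pairs m) (fun q => a q.1 + a q.2)
  -- arithmetic for lemmaF
  have hgsum : L0.length + ([] : List (Fin m × Fin m)).length + ∑ i, gwt p a i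
      = m * (p - 1) := by
    have hps := pairs_sum a
    have h1 : ∀ i, a i ≤ ∑ j, a j :=
      fun i => Finset.single_le_sum (fun _ _ => Nat.zero_le _) (Finset.mem_univ i)
    have h2 : ∑ i, (gwt p a i + ((∑ j, a j) - a i)) = ∑ _i : Fin m, (p - 1) := by
      refine Finset.sum_congr rfl fun i _ => ?_
      have := h1 i
      unfold gwt
      omega
    rw [Finset.sum_add_distrib] at h2
    have h3 : ∑ i, ((∑ j, a j) - a i) + ∑ i, a i = m * ∑ j, a j := by
      rw [← Finset.sum_add_distrib]
      have he : ∀ i : Fin m, ((∑ j, a j) - a i) + a i = ∑ j, a j := by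
        intro i
        have := h1 i
        omega
      rw [Finset.sum_congr rfl fun i _ => he i, Finset.sum_const]
      simp [mul_comm]
    simp only [Finset.sum_const, Finset.card_univ, Fintype.card_fin, smul_eq_mul] at h2
    rw [hlen]
    simp only [List.length_nil, add_zero]
    -- now pure arithmetic
    omega
  have hF := lemmaF L0 [] (gwt p a) hgsum
  have hpure : ∀ t : Fin m → ZMod p, pureProd t (L0.map Prod.fst ++ []) = Vprod a t := by
    intro t
    rw [List.append_nil, hL0, List.map_flatMap]
    unfold pureProd
    rw [prod_map_flatMap]
    rw [List.map_congr_left (fun q hq => ?_), Finset.prod_map_toList (pairs m)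
      (fun q => (t q.2 - t q.1) ^ (a q.1 + a q.2))]
    · rfl
    · simp only [List.map_map]
      show ((pad q).map (fun _ => t q.2 - t q.1)).prod = (t q.2 - t q.1) ^ (a q.1 + a q.2)
      rw [List.map_const', List.prod_replicate, hpadlen q (Finset.mem_toList.mp hq)]
  have hTs : (∑ t : Fin m → ZMod p, formProd t L0 * pureProd t [] * tpow (gwt p a) t)
      = Tsum p m a := by
    rw [hF, Tsum]
    exact Finset.sum_congr rfl fun t _ => by rw [hpure t]
  have hne : Tsum p m a ≠ 0 := by
    rw [dyson m a ha]
    exact mul_ne_zero (pow_ne_zero _ (neg_ne_zero.mpr one_ne_zero))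
      (multinomial_ne_zero_mod a ha)
  rw [← hTs] at hne
  obtain ⟨t, -, hnz⟩ := Finset.exists_ne_zero_of_sum_ne_zero hne
  have hform : formProd t L0 ≠ 0 := by
    intro h
    rw [h] at hnz
    simp at hnz
  refine ⟨t, ?_⟩
  have key : ∀ (i j : Fin m), i < j → ∀ x ∈ X i, ∀ y ∈ X j, x + t i ≠ y + t j := by
    intro i j hij x hx y hy hcol
    apply hform
    unfold formProd
    apply List.prod_eq_zero
    have hmem : ((i, j), x - y) ∈ L0 := by
      rw [hL0, List.mem_flatMap]
      refine ⟨(i, j), Finset.mem_toList.mpr ((mem_pairs _).mpr hij), ?_⟩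
      rw [List.mem_map]
      refine ⟨x - y, ?_, rfl⟩
      rw [hpad]
      exact List.mem_append_left _ (Finset.mem_toList.mpr (Finset.sub_mem_sub hx hy))
    rw [List.mem_map]
    refine ⟨((i, j), x - y), hmem, ?_⟩
    linear_combination -hcol
  intro i j hij
  rw [Finset.disjoint_left]
  rintro z hzi hzj
  obtain ⟨x, hx, hxz⟩ := Finset.mem_image.mp hzi
  obtain ⟨y, hy, hyz⟩ := Finset.mem_image.mp hzj
  rcases lt_or_gt_of_ne hij with h | h
  · exact key i j h x hx y hy (hxz.trans hyz.symm)
  · exact key j i h y hy x hx (hyz.trans hxz.symm)
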